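/- arXiv:2505.10386 — 2 statements merged into one kernel-verified Lean document; each statement's English description precedes it below -/
import Mathlib

section
/- Let G be a finite group and L a G-lattice. Then L admits a coflasque resolution of the second type: there exists a short exact sequence of G-lattices 0 → L → C → P → 0 in which C is a coflasque G-lattice and P is a permutation G-lattice. -/
set_option linter.unusedSectionVars false
set_option maxHeartbeats 1000000


/-! Core definitions: `G`-lattices, permutation lattices, coflasque lattices,
equivariant short exact sequences. -/

section Defs

variable (G : Type) [Group G] (L : Type) [AddCommGroup L] [DistribMulAction G L]

/-- `L` is a permutation `G`-lattice: it has a `ℤ`-basis indexed by a finite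
`G`-set that is permuted by the action of `G`. -/
def IsPermutationLattice : Prop :=
  ∃ (X : Type) (_ : Fintype X) (σ : G →* Equiv.Perm X) (b : Module.Basis X ℤ L),
    ∀ (g : G) (x : X), g • (b x) = b (σ g x)

/-- `L` is coflasque: `H¹(H, L) = 0` for every subgroup `H ≤ G`, expressed via
inhomogeneous 1-cocycles and 1-coboundaries. -/
def IsCoflasqueLattice : Prop :=
  ∀ H : Subgroup G, ∀ f : G → L,
    (∀ g ∈ H, ∀ h ∈ H, f (g * h) = f g + g • f h) →
    ∃ x : L, ∀ g ∈ H, f g = g • x - x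

/-- An exact sequence `0 → A → B → C → 0` of `G`-modules: `f` and `p` are
`ℤ`-linear, `G`-equivariant, `f` is injective, `p` is surjective, and
`ker p = range f`. -/
def IsEquivariantSES {A B C : Type} [AddCommGroup A] [AddCommGroup B] [AddCommGroup C]
    [DistribMulAction G A] [DistribMulAction G B] [DistribMulAction G C]
    (f : A →ₗ[ℤ] B) (p : B →ₗ[ℤ] C) : Prop :=
  (∀ (γ : G) (a : A), f (γ • a) = γ • f a) ∧
  (∀ (γ : G) (b : B), p (γ • b) = γ • p b) ∧
  Function.Injective f ∧ Function.Surjective p ∧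
  LinearMap.ker p = LinearMap.range f

end Defs

section PermH1
variable (G : Type) [Group G] [Finite G]

/-- `H¹` of a permutation module vanishes, in explicit cocycle form. -/
lemma perm_h1 {X : Type} [MulAction G X] (H : Subgroup G) (w : G → X → ℤ)
    (hw : ∀ g ∈ H, ∀ h ∈ H, w (g * h) = w g + fun y => w h (g⁻¹ • y)) :
    ∃ v : X → ℤ, ∀ g ∈ H, ∀ y : X, w g y = v (g⁻¹ • y) - v y := by
  classical
  have hw' : ∀ g ∈ H, ∀ h ∈ H, ∀ y : X, w (g * h) y = w g y + w h (g⁻¹ • y) := by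
    intro g hg h hh y
    rw [hw g hg h hh]; rfl
  have w_one : ∀ y, w 1 y = 0 := by
    intro y
    have := hw' 1 (one_mem H) 1 (one_mem H) y
    simp at this
    omega
  -- cocycle vanishes on stabilizers
  have stab : ∀ σ ∈ H, ∀ y : X, σ • y = y → w σ y = 0 := by
    intro σ hσ y hy
    have fix : ∀ n : ℕ, σ ^ n • y = y := by
      intro n
      induction n with
      | zero => simp
      | succ n ih => rw [pow_succ, mul_smul, hy, ih]
    have fixinv : ∀ n : ℕ, (σ ^ n)⁻¹ • y = y := by
      intro n
      rw [inv_smul_eq_iff, fix n]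
    have key : ∀ n : ℕ, w (σ ^ n) y = n * w σ y := by
      intro n
      induction n with
      | zero => simpa using w_one y
      | succ n ih =>
          have := hw' (σ ^ n) (pow_mem hσ n) σ hσ y
          rw [← pow_succ, fixinv n] at this
          rw [this, ih]; push_cast; ring
    have hord := key (orderOf σ)
    rw [pow_orderOf_eq_one, w_one] at hord
    have hpos : 0 < orderOf σ := orderOf_pos σ
    have : (orderOf σ : ℤ) ≠ 0 := by exact_mod_cast hpos.ne'
    rcases mul_eq_zero.mp hord.symm with h | h
    · exact absurd h this
    · exact h
  -- choose orbit representatives for the `H`-action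
  let r : Setoid X :=
    ⟨fun x y => ∃ h ∈ H, h • x = y,
      fun x => ⟨1, one_mem H, one_smul _ _⟩,
      by
        rintro x y ⟨h, hh, rfl⟩
        exact ⟨h⁻¹, inv_mem hh, by rw [inv_smul_smul]⟩,
      by
        rintro x y z ⟨h, hh, rfl⟩ ⟨k, hk, rfl⟩
        exact ⟨k * h, mul_mem hk hh, (mul_smul _ _ _)⟩⟩
  let ρ : X → X := fun x => (Quotient.mk r x).out
  have hρ : ∀ x : X, ∃ h ∈ H, h • ρ x = x := by
    intro x
    have : (Quotient.mk r (ρ x)) = Quotient.mk r x := Quotient.out_eq _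
    exact Quotient.exact this
  have hρ_inv : ∀ g ∈ H, ∀ x : X, ρ (g⁻¹ • x) = ρ x := by
    intro g hg x
    have : Quotient.mk r (g⁻¹ • x) = Quotient.mk r x :=
      Quotient.sound ⟨g, hg, by rw [smul_inv_smul]⟩
    show (Quotient.mk r (g⁻¹ • x)).out = (Quotient.mk r x).out
    rw [this]
  choose τ hτH hτ using hρ
  refine ⟨fun x => -(w (τ x) x), ?_⟩
  intro g hg x
  set t := τ x with ht
  set t' := τ (g⁻¹ • x) with ht'
  have htH : t ∈ H := hτH x
  have ht'H : t' ∈ H := hτH (g⁻¹ • x)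
  have hxx : t • ρ x = x := hτ x
  have hx'x : t' • ρ (g⁻¹ • x) = g⁻¹ • x := hτ (g⁻¹ • x)
  rw [hρ_inv g hg x] at hx'x
  -- s := t⁻¹ * g * t' stabilizes ρ x
  have hsH : t⁻¹ * g * t' ∈ H := mul_mem (mul_mem (inv_mem htH) hg) ht'H
  have hs_fix : (t⁻¹ * g * t') • ρ x = ρ x := by
    rw [mul_smul, mul_smul, hx'x, smul_inv_smul, inv_smul_eq_iff, hxx]
  have hzero : w (t⁻¹ * g * t') (ρ x) = 0 := stab _ hsH _ hs_fix
  -- two expansions of w (g * t') x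
  have e1 : w (g * t') x = w g x + w t' (g⁻¹ • x) := hw' g hg t' ht'H x
  have e2 : w (t * (t⁻¹ * g * t')) x = w t x + w (t⁻¹ * g * t') (t⁻¹ • x) := by
    exact hw' t htH _ hsH x
  have heq : t * (t⁻¹ * g * t') = g * t' := by group
  have htinv : t⁻¹ • x = ρ x := by rw [inv_smul_eq_iff, hxx]
  rw [heq, htinv, hzero, add_zero] at e2
  rw [e2] at e1
  show w g x = -(w t' (g⁻¹ • x)) - -(w t x)
  omega
end PermH1
section Lattice
open scoped Classical
variable (G : Type) [Group G] [Finite G]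
variable (L : Type) [AddCommGroup L] [DistribMulAction G L]
  [Module.Free ℤ L] [Module.Finite ℤ L]

lemma gsmul_zsmul {L : Type} [AddCommGroup L] [DistribMulAction G L]
    (g : G) (n : ℤ) (x : L) : g • (n • x) = n • (g • x) :=
  (DistribMulAction.toAddMonoidHom L g).map_zsmul n x

/-- The submodule of functions `G → L` satisfying the cocycle condition on `H`. -/
def Zc (H : Subgroup G) : Submodule ℤ (G → L) where
  carrier := {f | ∀ g ∈ H, ∀ h ∈ H, f (g * h) = f g + g • f h}
  add_mem' := by
    intro f f' hf hf' g hg h hh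
    show (f + f') (g * h) = (f + f') g + g • (f + f') h
    simp only [Pi.add_apply, hf g hg h hh, hf' g hg h hh, smul_add]
    abel
  zero_mem' := by
    intro g _ h _
    simp
  smul_mem' := by
    intro n f hf g hg h hh
    show (n • f) (g * h) = (n • f) g + g • (n • f) h
    simp only [Pi.smul_apply, hf g hg h hh, smul_add]
    rw [gsmul_zsmul]

lemma Zc_fg (H : Subgroup G) : (Zc G L H).FG := by
  haveI : Fintype G := Fintype.ofFinite G
  exact IsNoetherian.noetherian _

/-- A finite generating set for the cocycle module. -/
noncomputable def genS (H : Subgroup G) : Finset (G → L) := (Zc_fg G L H).choose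

lemma genS_span (H : Subgroup G) : Submodule.span ℤ ↑(genS G L H) = Zc G L H :=
  (Zc_fg G L H).choose_spec

lemma genS_mem {H : Subgroup G} {f : G → L} (hf : f ∈ genS G L H) :
    ∀ g ∈ H, ∀ h ∈ H, f (g * h) = f g + g • f h := by
  have : f ∈ Zc G L H := by
    rw [← genS_span]
    exact Submodule.subset_span hf
  exact this

lemma genS_one {H : Subgroup G} {f : G → L} (hf : f ∈ genS G L H) : f 1 = 0 := by
  have := genS_mem G L hf 1 (one_mem H) 1 (one_mem H)
  simp only [mul_one, one_smul] at this
  exact (left_eq_add.mp this)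

/-- Index set: a subgroup together with a generating cocycle. -/
abbrev Idx : Type := Σ H : Subgroup G, {f : G → L // f ∈ genS G L H}

/-- The finite `G`-set indexing the permutation lattice. -/
abbrev XX : Type := Σ i : Idx G L, G ⧸ i.1

noncomputable local instance : Fintype (Subgroup G) := Fintype.ofFinite _
noncomputable local instance : Fintype G := Fintype.ofFinite _

lemma finiteXX : Finite (XX G L) := by infer_instance

example : MulAction G (XX G L) := by infer_instance

noncomputable local instance : Fintype (XX G L) := Fintype.ofFinite _

/-- A section of `G → G ⧸ H` sending the trivial coset to `1`. -/
noncomputable def sec (H : Subgroup G) (q : G ⧸ H) : G :=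
  if q = ((1 : G) : G ⧸ H) then 1 else q.out

lemma sec_mk (H : Subgroup G) (q : G ⧸ H) : ((sec G H q : G) : G ⧸ H) = q := by
  unfold sec
  split
  · rename_i h; rw [h]
  · exact QuotientGroup.out_eq' q

lemma sec_one (H : Subgroup G) : sec G H ((1 : G) : G ⧸ H) = 1 := if_pos rfl

lemma sec_conj_mem (H : Subgroup G) (g : G) (q : G ⧸ H) :
    (sec G H (g • q))⁻¹ * g * sec G H q ∈ H := by
  have h1 : ((sec G H (g • q) : G) : G ⧸ H) = g • q := sec_mk G H _
  have h2 : ((g * sec G H q : G) : G ⧸ H) = g • q := by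
    rw [show g * sec G H q = g • sec G H q from rfl, ← MulAction.Quotient.smul_mk, sec_mk]
  rw [mul_assoc]
  exact QuotientGroup.eq.mp (h1.trans h2.symm)

/-- The twisting cochain. -/
noncomputable def phi (g : G) (x : XX G L) : L :=
  sec G x.1.1 (g • x.2) • (x.1.2.1 ((sec G x.1.1 (g • x.2))⁻¹ * g * sec G x.1.1 x.2))

lemma phi_one (x : XX G L) : phi G L 1 x = 0 := by
  obtain ⟨⟨H, f, hf⟩, q⟩ := x
  show sec G H ((1 : G) • q) • (f ((sec G H ((1:G) • q))⁻¹ * 1 * sec G H q)) = 0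
  rw [one_smul]
  rw [mul_one, inv_mul_cancel]
  rw [genS_one G L hf, smul_zero]

lemma phi_mul (g g' : G) (x : XX G L) :
    phi G L (g * g') x = phi G L g (g' • x) + g • phi G L g' x := by
  obtain ⟨⟨H, f, hf⟩, q⟩ := x
  have hsx : (g' • (⟨⟨H, f, hf⟩, q⟩ : XX G L)) = ⟨⟨H, f, hf⟩, g' • q⟩ := rfl
  rw [hsx]
  show sec G H ((g * g') • q) • (f ((sec G H ((g * g') • q))⁻¹ * (g * g') * sec G H q))
    = sec G H (g • (g' • q)) • (f ((sec G H (g • (g' • q)))⁻¹ * g * sec G H (g' • q)))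
      + g • (sec G H (g' • q) • (f ((sec G H (g' • q))⁻¹ * g' * sec G H q)))
  rw [← mul_smul g g' q]
  set a := sec G H ((g * g') • q) with ha
  set b := sec G H (g' • q) with hb
  set c := sec G H q with hc
  have h1 : a⁻¹ * g * b ∈ H := by
    have := sec_conj_mem G H g (g' • q)
    rwa [← mul_smul g g' q] at this
  have h2 : b⁻¹ * g' * c ∈ H := sec_conj_mem G H g' q
  have key : a⁻¹ * (g * g') * c = (a⁻¹ * g * b) * (b⁻¹ * g' * c) := by group
  rw [key, genS_mem G L hf _ h1 _ h2, smul_add, ← mul_smul, ← mul_smul]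
  have : a * (a⁻¹ * g * b) = g * b := by group
  rw [this]

/-- The middle term of the resolution. -/
abbrev CC : Type := L × (XX G L → ℤ)

/-- The twisted `G`-action on `CC`. -/
noncomputable def csmul (g : G) (c : CC G L) : CC G L :=
  (g • c.1 + ∑ x : XX G L, c.2 x • phi G L g x, fun y => c.2 (g⁻¹ • y))

lemma csmul_one (c : CC G L) : csmul G L 1 c = c := by
  unfold csmul
  ext1
  · simp [phi_one]
  · funext y
    simp

lemma csmul_mul (g g' : G) (c : CC G L) :
    csmul G L (g * g') c = csmul G L g (csmul G L g' c) := by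
  unfold csmul
  ext1
  · show (g * g') • c.1 + ∑ x : XX G L, c.2 x • phi G L (g * g') x
      = g • (g' • c.1 + ∑ x : XX G L, c.2 x • phi G L g' x)
        + ∑ y : XX G L, c.2 (g'⁻¹ • y) • phi G L g y
    rw [smul_add, ← mul_smul]
    have hmap : g • (∑ x : XX G L, c.2 x • phi G L g' x)
        = ∑ x : XX G L, c.2 x • (g • phi G L g' x) := by
      rw [Finset.smul_sum]
      exact Finset.sum_congr rfl fun x _ => gsmul_zsmul G g _ _
    rw [hmap]
    have hre : ∑ x : XX G L, c.2 x • phi G L g (g' • x)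
        = ∑ y : XX G L, c.2 (g'⁻¹ • y) • phi G L g y := by
      refine Fintype.sum_equiv (MulAction.toPerm g') _ _ fun x => ?_
      simp only [MulAction.toPerm_apply, inv_smul_smul]
    rw [← hre, add_assoc, ← Finset.sum_add_distrib]
    congr 1
    refine Finset.sum_congr rfl fun x _ => ?_
    rw [phi_mul, smul_add, add_comm]
  · funext y
    show c.2 ((g * g')⁻¹ • y) = c.2 (g'⁻¹ • g⁻¹ • y)
    rw [mul_inv_rev, mul_smul]

lemma csmul_add (g : G) (c c' : CC G L) :
    csmul G L g (c + c') = csmul G L g c + csmul G L g c' := by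
  unfold csmul
  ext1
  · show g • (c.1 + c'.1) + ∑ x : XX G L, (c.2 x + c'.2 x) • phi G L g x = _
    simp only [smul_add, add_smul, Finset.sum_add_distrib]
    show _ = g • c.1 + (∑ x : XX G L, c.2 x • phi G L g x)
      + (g • c'.1 + ∑ x : XX G L, c'.2 x • phi G L g x)
    abel
  · rfl

lemma csmul_zero (g : G) : csmul G L g 0 = 0 := by
  unfold csmul
  ext1
  · simp
  · funext y; rfl

/-- The `G`-module structure on `CC`. -/
noncomputable def cInst : DistribMulAction G (CC G L) where
  smul := csmul G L
  one_smul := csmul_one G L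
  mul_smul := csmul_mul G L
  smul_zero := csmul_zero G L
  smul_add := csmul_add G L

/-- The `G`-module structure on the permutation module. -/
def pInst : DistribMulAction G (XX G L → ℤ) where
  smul g v := fun y => v (g⁻¹ • y)
  one_smul v := by funext y; show v (1⁻¹ • y) = v y; rw [inv_one, one_smul]
  mul_smul g g' v := by
    funext y
    show v ((g * g')⁻¹ • y) = v (g'⁻¹ • g⁻¹ • y)
    rw [mul_inv_rev, mul_smul]
  smul_zero g := rfl
  smul_add g v v' := rfl

example : Module.Free ℤ (CC G L) := inferInstance
example : Module.Finite ℤ (CC G L) := inferInstance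

/-- Indicator function. -/
noncomputable def ind (x₀ : XX G L) : XX G L → ℤ :=
  fun y => @ite _ (y = x₀) (Classical.propDecidable _) 1 0

lemma ind_self (x₀ : XX G L) : ind G L x₀ x₀ = 1 := if_pos rfl

lemma ind_ne {x₀ y : XX G L} (h : y ≠ x₀) : ind G L x₀ y = 0 := if_neg h

/-- The distinguished basis vector of the `i`-th block. -/
noncomputable def eC (i : Idx G L) : CC G L :=
  (0, ind G L (⟨i, ((1 : G) : G ⧸ i.1)⟩ : XX G L))

lemma csmul_eC {i : Idx G L} {g : G} (hg : g ∈ i.1) :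
    csmul G L g (eC G L i) - eC G L i = ((i.2.1 g, 0) : CC G L) := by
  obtain ⟨H, f, hf⟩ := i
  set x₀ : XX G L := ⟨⟨H, f, hf⟩, ((1 : G) : G ⧸ H)⟩ with hx₀
  have hq : g • ((1 : G) : G ⧸ H) = ((1 : G) : G ⧸ H) := by
    rw [MulAction.Quotient.smul_mk, smul_eq_mul, mul_one]
    exact (QuotientGroup.eq).mpr (by simpa using inv_mem hg)
  have hgx₀ : g • x₀ = x₀ := by
    show (⟨⟨H, f, hf⟩, g • ((1 : G) : G ⧸ H)⟩ : XX G L) = x₀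
    rw [hq]
  unfold csmul eC
  ext1
  · show g • (0 : L) + (∑ x : XX G L, ind G L x₀ x • phi G L g x) - 0 = f g
    rw [smul_zero, zero_add, sub_zero]
    rw [Finset.sum_eq_single x₀ (fun b _ hb => by
      rw [ind_ne G L hb, zero_smul]) (fun h => absurd (Finset.mem_univ _) h)]
    rw [ind_self, one_smul]
    show sec G H (g • ((1:G) : G ⧸ H)) •
      (f ((sec G H (g • ((1:G) : G ⧸ H)))⁻¹ * g * sec G H ((1:G) : G ⧸ H))) = f g
    rw [hq, sec_one, inv_one, one_mul, mul_one, one_smul]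
  · funext y
    show ind G L x₀ (g⁻¹ • y) - ind G L x₀ y = (0 : XX G L → ℤ) y
    rw [Pi.zero_apply]
    by_cases h : y = x₀
    · rw [h, show g⁻¹ • x₀ = x₀ from by rw [inv_smul_eq_iff]; exact hgx₀.symm, ind_self]
      ring
    · rw [ind_ne G L h, ind_ne G L (fun hc => h (by rw [← hgx₀, ← hc, smul_inv_smul]))]
      ring

lemma perm_XX : @IsPermutationLattice G _ (XX G L → ℤ) _ (pInst G L) := by
  classical
  refine ⟨XX G L, inferInstance, MulAction.toPermHom G (XX G L),
    Pi.basisFun ℤ (XX G L), fun g x => ?_⟩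
  funext y
  show (Pi.basisFun ℤ (XX G L) x) (g⁻¹ • y) = (Pi.basisFun ℤ (XX G L)) (g • x) y
  rw [Pi.basisFun_apply, Pi.basisFun_apply, Pi.single_apply, Pi.single_apply]
  by_cases h : y = g • x
  · rw [if_pos h, if_pos (by rw [h, inv_smul_smul] : g⁻¹ • y = x)]
  · rw [if_neg h, if_neg (fun hc => h (by rw [← hc, smul_inv_smul]) : ¬ g⁻¹ • y = x)]

lemma ses_XX : @IsEquivariantSES G _ L (CC G L) (XX G L → ℤ) _ _ _ _ (cInst G L) (pInst G L)
    (LinearMap.inl ℤ L (XX G L → ℤ)) (LinearMap.snd ℤ L (XX G L → ℤ)) := by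
  refine ⟨fun γ a => ?_, fun γ c => rfl, LinearMap.inl_injective,
    fun v => ⟨(0, v), rfl⟩, LinearMap.ker_snd _ _ _⟩
  show ((γ • a, 0) : CC G L) = csmul G L γ (a, 0)
  unfold csmul
  ext1
  · show γ • a = γ • a + ∑ x : XX G L, (0 : XX G L → ℤ) x • phi G L γ x
    simp
  · funext y
    rfl

lemma coflasque_CC : @IsCoflasqueLattice G _ (CC G L) _ (cInst G L) := by
  letI : DistribMulAction G (CC G L) := cInst G L
  intro H F hF
  -- the second components form a cocycle in the permutation module
  have hwc : ∀ g ∈ H, ∀ h ∈ H,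
      (fun g => (F g).2) (g * h) = (fun g => (F g).2) g + fun y => (fun g => (F g).2) h (g⁻¹ • y) :=
    fun g hg h hh => congrArg Prod.snd (hF g hg h hh)
  obtain ⟨v, hv⟩ := perm_h1 G H (fun g => (F g).2) hwc
  set c₀ : CC G L := (0, v) with hc₀def
  set F' : G → CC G L := fun g => F g - g • c₀ + c₀ with hF'def
  have hF'snd : ∀ g ∈ H, (F' g).2 = 0 := by
    intro g hg
    funext y
    show (F g).2 y - v (g⁻¹ • y) + v y = 0
    rw [hv g hg y]
    ring
  set a : G → L := fun g => (F' g).1 with hadef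
  have haZ : a ∈ Zc G L H := by
    intro g hg h hh
    have e1 : F' (g * h) = F' g + g • F' h := by
      show F (g * h) - (g * h) • c₀ + c₀ = F g - g • c₀ + c₀ + g • (F h - h • c₀ + c₀)
      rw [hF g hg h hh, mul_smul, smul_add, smul_sub]
      abel
    have e2 := congrArg Prod.fst e1
    show a (g * h) = a g + g • a h
    rw [show a (g * h) = (F' (g * h)).1 from rfl, e2]
    show (F' g).1 + (g • (F' h).1 + ∑ x : XX G L, (F' h).2 x • phi G L g x) = a g + g • a h
    rw [hF'snd h hh]
    simp
    rfl
  have haS : a ∈ Submodule.span ℤ ↑(genS G L H) := by rw [genS_span]; exact haZ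
  obtain ⟨n, -, hn⟩ := Submodule.mem_span_finset.mp haS
  refine ⟨c₀ + ∑ f ∈ (genS G L H).attach, n f.1 • eC G L ⟨H, f⟩, ?_⟩
  intro g hg
  have expand : g • (c₀ + ∑ f ∈ (genS G L H).attach, n f.1 • eC G L ⟨H, f⟩)
      - (c₀ + ∑ f ∈ (genS G L H).attach, n f.1 • eC G L ⟨H, f⟩)
      = (g • c₀ - c₀)
        + ∑ f ∈ (genS G L H).attach, n f.1 • (g • eC G L ⟨H, f⟩ - eC G L ⟨H, f⟩) := by
    rw [smul_add, Finset.smul_sum,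
      Finset.sum_congr rfl fun f _ => gsmul_zsmul G g (n f.1) (eC G L ⟨H, f⟩),
      Finset.sum_congr rfl fun f _ => (smul_sub (n f.1) (g • eC G L ⟨H, f⟩) (eC G L ⟨H, f⟩))]
    rw [Finset.sum_sub_distrib]
    abel
  rw [expand]
  have he : ∀ f : {f : G → L // f ∈ genS G L H},
      g • eC G L ⟨H, f⟩ - eC G L ⟨H, f⟩ = ((f.1 g, 0) : CC G L) :=
    fun f => csmul_eC G L (i := ⟨H, f⟩) hg
  rw [Finset.sum_congr rfl fun f _ => by rw [he f]]
  have hc₀ : g • c₀ - c₀ = ((∑ x : XX G L, v x • phi G L g x, (F g).2) : CC G L) := by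
    show csmul G L g c₀ - c₀ = _
    unfold csmul
    ext1
    · show g • (0 : L) + (∑ x : XX G L, v x • phi G L g x) - 0 = _
      simp
    · funext y
      show v (g⁻¹ • y) - v y = (F g).2 y
      exact (hv g hg y).symm
  rw [hc₀]
  have hsum : (∑ f ∈ (genS G L H).attach, n f.1 • ((f.1 g, 0) : CC G L))
      = ((a g, 0) : CC G L) := by
    have h1 : (∑ f ∈ (genS G L H).attach, n f.1 • ((f.1 g, 0) : CC G L))
        = ((∑ f ∈ (genS G L H).attach, n f.1 • f.1 g, 0) : CC G L) := by
      rw [Prod.ext_iff]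
      constructor
      · rw [Prod.fst_sum]
        simp
      · rw [Prod.snd_sum]
        simp
    rw [h1]
    congr 1
    have h2 : (∑ f ∈ (genS G L H).attach, n f.1 • f.1 g)
        = ∑ f ∈ genS G L H, n f • f g :=
      Finset.sum_attach (genS G L H) (fun f => n f • f g)
    rw [h2]
    have h3 := congrFun hn g
    rw [Finset.sum_apply] at h3
    exact h3
  rw [hsum]
  have hag : a g = (F g).1 - ∑ x : XX G L, v x • phi G L g x := by
    show (F g).1 - (csmul G L g c₀).1 + c₀.1 = _
    show (F g).1 - (g • (0 : L) + ∑ x : XX G L, v x • phi G L g x) + 0 = _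
    rw [smul_zero, zero_add, add_zero]
  rw [Prod.mk_add_mk, hag]
  rw [Prod.ext_iff]
  constructor
  · show (F g).1 = ∑ x : XX G L, v x • phi G L g x
      + ((F g).1 - ∑ x : XX G L, v x • phi G L g x)
    abel
  · show (F g).2 = (F g).2 + 0
    rw [add_zero]

end Lattice

/-- **Existence of coflasque resolutions of the second type.**
If `G` is a finite group and `L` is a `G`-lattice, then there is a short exact
sequence of `G`-lattices `0 → L → C → P → 0` with `C` a coflasque `G`-lattice
and `P` a permutation `G`-lattice. -/
theorem coflasque_resolution_second_type
    (G : Type) [Group G] [Finite G]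
    (L : Type) [AddCommGroup L] [DistribMulAction G L]
    (hLfree : Module.Free ℤ L) (hLfin : Module.Finite ℤ L) :
    ∃ (C P : Type) (_ : AddCommGroup C) (_ : AddCommGroup P)
      (_ : DistribMulAction G C) (_ : DistribMulAction G P),
      Module.Free ℤ C ∧ Module.Finite ℤ C ∧
      IsCoflasqueLattice G C ∧ IsPermutationLattice G P ∧
      ∃ (f : L →ₗ[ℤ] C) (p : C →ₗ[ℤ] P), IsEquivariantSES G f p := by
  haveI := hLfree
  haveI := hLfin
  exact ⟨CC G L, XX G L → ℤ, inferInstance, inferInstance, cInst G L, pInst G L,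
    inferInstance, inferInstance, coflasque_CC G L, perm_XX G L,
    ⟨LinearMap.inl ℤ L (XX G L → ℤ), LinearMap.snd ℤ L (XX G L → ℤ), ses_XX G L⟩⟩
end

section
/- Let G be a finite group of order n. Then n·1 = 0 in the ring τ_ℤ(G), and τ_ℤ(G) is a finite ring. -/
set_option synthInstance.maxHeartbeats 1000000
set_option maxHeartbeats 1000000

/-! ## The Yoshida algebra `γ_R(G)` and the Tate–Yoshida algebra `τ_R(G)` -/

section Yoshida

variable (R : Type) [CommRing R] (G : Type) [Group G]

/-- The `G`-action on a permutation module `R[X] = (X →₀ R)` by permuting the basis. -/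
noncomputable instance (X : Type) [MulAction G X] : DistribMulAction G (X →₀ R) :=
  Finsupp.comapDistribMulAction

/-- The direct sum `⊕_{H ≤ G} R[G/H]` of all the transitive permutation
`RG`-modules, with its componentwise `G`-action. -/
abbrev BigPermModule : Type := ∀ H : Subgroup G, (G ⧸ H →₀ R)

/-- The ring `End_{RG}(⊕_{H ≤ G} R[G/H])` of `RG`-module endomorphisms, i.e.
`R`-linear `G`-equivariant endomorphisms, of the direct sum of all transitive
permutation modules. -/
noncomputable def permEnd : Subring (Module.End R (BigPermModule R G)) where
  carrier := {f | ∀ (g : G) (v : BigPermModule R G), f (g • v) = g • f v}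
  zero_mem' := by intro g v; simp
  one_mem' := by intro g v; simp
  add_mem' := by
    intro a b ha hb g v
    simp [ha g v, hb g v, smul_add]
  neg_mem' := by
    intro a ha g v
    simp [ha g v]
  mul_mem' := by
    intro a b ha hb g v
    have h1 : (a * b) (g • v) = a (b (g • v)) := rfl
    rw [h1, hb g v, ha g (b v)]
    rfl

/-- The Yoshida algebra `γ_R(G) = End_{RG}(⊕_{H ≤ G} R[G/H])ᵒᵖ`. -/
abbrev YoshidaAlgebra : Type := (permEnd R G)ᵐᵒᵖ

/-- The idempotent `e₁ ∈ γ_R(G)`: the identity on the summand `R[G/1] = RG` and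
zero on all other summands. -/
noncomputable def yoshidaE1 : YoshidaAlgebra R G :=
  haveI : DecidableEq (Subgroup G) := Classical.decEq _
  MulOpposite.op
    ⟨(LinearMap.single R (fun H : Subgroup G => (G ⧸ H →₀ R)) ⊥).comp (LinearMap.proj ⊥),
      by
        intro g v
        funext H
        by_cases h : H = (⊥ : Subgroup G)
        · subst h
          simp [LinearMap.coe_single, Pi.single_apply, Pi.smul_apply]
        · simp [LinearMap.coe_single, Pi.single_apply, h, Pi.smul_apply]⟩

/-- The Tate–Yoshida algebra `τ_R(G) = γ_R(G)/⟨e₁⟩`, the quotient of the Yoshida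
algebra by the two-sided ideal generated by the idempotent `e₁`. -/
abbrev TateYoshidaAlgebra : Type :=
  RingQuot (fun a b : YoshidaAlgebra R G => a = yoshidaE1 R G ∧ b = 0)

end Yoshida
set_option linter.unusedSectionVars false

section Aux

variable {G : Type} [Group G] [Finite G]

noncomputable def piH (H : Subgroup G) : G ⧸ (⊥ : Subgroup G) → G ⧸ H :=
  fun q => Quotient.liftOn' q (QuotientGroup.mk : G → G ⧸ H)
    (fun a b h => by
      have hab : a = b := by
        have := QuotientGroup.leftRel_apply.mp h
        have h1 : a⁻¹ * b = 1 := Subgroup.mem_bot.mp this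
        exact (eq_of_inv_mul_eq_one h1)
      rw [hab])

lemma piH_mk (H : Subgroup G) (g : G) : piH H (↑g) = (↑g : G ⧸ H) := rfl

lemma piH_smul (H : Subgroup G) (g : G) (q : G ⧸ (⊥ : Subgroup G)) :
    piH H (g • q) = g • piH H q := by
  induction q using QuotientGroup.induction_on with
  | H x => rfl

/-- `α_H : ℤ[G/H] → ℤ[G/⊥]`, `f ↦ f ∘ π_H`. -/
noncomputable def alphaH (H : Subgroup G) :
    ((G ⧸ H) →₀ ℤ) →ₗ[ℤ] ((G ⧸ (⊥ : Subgroup G)) →₀ ℤ) :=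
  ((Finsupp.linearEquivFunOnFinite ℤ ℤ _).symm.toLinearMap).comp
    ((LinearMap.funLeft ℤ ℤ (piH H)).comp
      (Finsupp.linearEquivFunOnFinite ℤ ℤ _).toLinearMap)

lemma alphaH_apply (H : Subgroup G) (f : (G ⧸ H) →₀ ℤ) (q : G ⧸ (⊥ : Subgroup G)) :
    alphaH H f q = f (piH H q) := rfl

/-- `β_H : ℤ[G/⊥] → ℤ[G/H]`, induced by `π_H` on the basis. -/
noncomputable def betaH (H : Subgroup G) :
    ((G ⧸ (⊥ : Subgroup G)) →₀ ℤ) →ₗ[ℤ] ((G ⧸ H) →₀ ℤ) :=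
  Finsupp.lmapDomain ℤ ℤ (piH H)

lemma smul_finsupp_apply {X : Type} [MulAction G X] (g : G) (f : X →₀ ℤ) (x : X) :
    (g • f) x = f (g⁻¹ • x) := by
  have : g • f = Finsupp.mapDomain (g • ·) f := rfl
  rw [this]
  have := Finsupp.mapDomain_apply (f := (g • · : X → X)) (MulAction.injective g) f (g⁻¹ • x)
  simpa using this

lemma alphaH_smul (H : Subgroup G) (g : G) (f : (G ⧸ H) →₀ ℤ) :
    alphaH H (g • f) = g • alphaH H f := by
  ext q
  rw [alphaH_apply, smul_finsupp_apply, smul_finsupp_apply, alphaH_apply, piH_smul]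

lemma betaH_smul (H : Subgroup G) (g : G) (f : (G ⧸ (⊥ : Subgroup G)) →₀ ℤ) :
    betaH H (g • f) = g • betaH H f := by
  show Finsupp.mapDomain (piH H) (Finsupp.mapDomain (g • ·) f)
      = Finsupp.mapDomain (g • ·) (Finsupp.mapDomain (piH H) f)
  rw [← Finsupp.mapDomain_comp, ← Finsupp.mapDomain_comp]
  congr 1
  funext q
  exact (piH_smul H g q)

end Aux
section Aux2

variable {G : Type} [Group G] [Finite G]

noncomputable def eGbot : G ≃ G ⧸ (⊥ : Subgroup G) :=
  Equiv.ofBijective (QuotientGroup.mk : G → G ⧸ (⊥ : Subgroup G))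
    ⟨fun a b hab => by
        have := QuotientGroup.eq.mp hab
        simpa using (eq_of_inv_mul_eq_one (Subgroup.mem_bot.mp this)),
     QuotientGroup.mk_surjective⟩

lemma card_fiber (H : Subgroup G) (p : G ⧸ H) :
    Nat.card {q : G ⧸ (⊥ : Subgroup G) // piH H q = p} = Nat.card H := by
  have e1 : {g : G // (↑g : G ⧸ H) = p} ≃ {q : G ⧸ (⊥ : Subgroup G) // piH H q = p} :=
    (eGbot (G := G)).subtypeEquiv
      (fun g => by rw [show piH H (eGbot g) = (↑g : G ⧸ H) from rfl])
  have e2 : {g : G // (↑g : G ⧸ H) = p} ≃ ↥((QuotientGroup.mk : G → G ⧸ H) ⁻¹' {p}) :=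
    Equiv.subtypeEquivRight (fun g => by simp)
  have e3 := QuotientGroup.preimageMkEquivSubgroupProdSet H ({p} : Set (G ⧸ H))
  rw [← Nat.card_congr e1, Nat.card_congr (e2.trans e3), Nat.card_prod]
  simp

lemma betaH_alphaH (H : Subgroup G) (f : (G ⧸ H) →₀ ℤ) :
    betaH H (alphaH H f) = (Nat.card H : ℤ) • f := by
  classical
  haveI := Fintype.ofFinite (G ⧸ (⊥ : Subgroup G))
  ext p
  have h1 : betaH H (alphaH H f)
      = ∑ a : G ⧸ (⊥ : Subgroup G), Finsupp.single (piH H a) (alphaH H f a) := by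
    show Finsupp.mapDomain (piH H) (alphaH H f) = _
    rw [Finsupp.mapDomain]
    exact Finsupp.sum_fintype _ _ (fun a => Finsupp.single_zero _)
  rw [h1, Finsupp.finset_sum_apply]
  simp only [Finsupp.single_apply, alphaH_apply]
  have h2 : ∀ a : G ⧸ (⊥ : Subgroup G),
      (if piH H a = p then f (piH H a) else 0) = (if piH H a = p then f p else 0) := by
    intro a; split <;> simp_all
  rw [Finset.sum_congr rfl (fun a _ => h2 a), ← Finset.sum_filter]
  rw [Finset.sum_const]
  have h3 : (Finset.univ.filter (fun a => piH H a = p)).card = Nat.card H := by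
    rw [← Fintype.card_subtype, ← Nat.card_eq_fintype_card, card_fiber]
  rw [h3, Finsupp.smul_apply]
  simp [zsmul_eq_mul]

end Aux2
section Aux3

variable {G : Type} [Group G] [Finite G] [DecidableEq (Subgroup G)]

lemma single_smul_big (K0 : Subgroup G) (g : G) (y : G ⧸ K0 →₀ ℤ) :
    (Pi.single K0 (g • y) : BigPermModule ℤ G) = g • (Pi.single K0 y : BigPermModule ℤ G) := by
  funext K
  rw [Pi.smul_apply]
  by_cases h : K = K0
  · subst h; rw [Pi.single_eq_same, Pi.single_eq_same]
  · rw [Pi.single_eq_of_ne h, Pi.single_eq_of_ne h, smul_zero]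

/-- `B_H ∈ End`: project to the `H` component, apply `α_H`, include at `⊥`. -/
noncomputable def Bel (H : Subgroup G) : permEnd ℤ G :=
  ⟨(LinearMap.single ℤ (fun K : Subgroup G => (G ⧸ K →₀ ℤ)) ⊥).comp
      ((alphaH H).comp (LinearMap.proj H)), by
    intro g v
    show (Pi.single ⊥ (alphaH H ((g • v) H)) : BigPermModule ℤ G)
        = g • (Pi.single ⊥ (alphaH H (v H)) : BigPermModule ℤ G)
    rw [show (g • v) H = g • (v H) from rfl, alphaH_smul, single_smul_big]⟩

/-- `A_H ∈ End`: project to the `⊥` component, apply `[G:H] • β_H`, include at `H`. -/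
noncomputable def Ael (H : Subgroup G) : permEnd ℤ G :=
  ⟨(LinearMap.single ℤ (fun K : Subgroup G => (G ⧸ K →₀ ℤ)) H).comp
      (((H.index : ℤ) • betaH H).comp (LinearMap.proj ⊥)), by
    intro g v
    show (Pi.single H ((H.index : ℤ) • betaH H ((g • v) ⊥)) : BigPermModule ℤ G)
        = g • (Pi.single H ((H.index : ℤ) • betaH H (v ⊥)) : BigPermModule ℤ G)
    rw [show (g • v) ⊥ = g • (v ⊥) from rfl, betaH_smul, ← single_smul_big]
    have hcomm : (H.index : ℤ) • g • betaH H (v ⊥) = g • (H.index : ℤ) • betaH H (v ⊥) :=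
      ((DistribMulAction.toAddMonoidHom ((G ⧸ H →₀ ℤ)) g).map_zsmul
        (H.index : ℤ) (betaH H (v ⊥))).symm
    exact congrArg (fun x => Pi.single H x) hcomm⟩

/-- The underlying element of `e₁`. -/
noncomputable def E1el : permEnd ℤ G :=
  ⟨(LinearMap.single ℤ (fun K : Subgroup G => (G ⧸ K →₀ ℤ)) ⊥).comp (LinearMap.proj ⊥), by
    intro g v
    show (Pi.single ⊥ ((g • v) ⊥) : BigPermModule ℤ G)
        = g • (Pi.single ⊥ (v ⊥) : BigPermModule ℤ G)
    rw [show (g • v) ⊥ = g • (v ⊥) from rfl, single_smul_big]⟩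

lemma key_sum [Fintype (Subgroup G)] :
    ((Nat.card G : ℕ) : permEnd ℤ G) = ∑ H : Subgroup G, Ael H * E1el * Bel H := by
  apply Subtype.ext
  have hc : ((∑ H : Subgroup G, Ael H * E1el * Bel H : permEnd ℤ G) :
      Module.End ℤ (BigPermModule ℤ G))
      = ∑ H : Subgroup G, ((Ael H : Module.End ℤ (BigPermModule ℤ G)))
          * ((E1el (G := G) : Module.End ℤ (BigPermModule ℤ G)))
          * ((Bel H : Module.End ℤ (BigPermModule ℤ G))) := by
    rw [AddSubmonoidClass.coe_finset_sum]
    rfl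
  have hn : (((Nat.card G : ℕ) : permEnd ℤ G) : Module.End ℤ (BigPermModule ℤ G))
      = ((Nat.card G : ℕ) : Module.End ℤ (BigPermModule ℤ G)) := by
    push_cast
    rfl
  rw [hc, hn]
  apply LinearMap.ext
  intro v
  rw [LinearMap.sum_apply]
  have hterm : ∀ H : Subgroup G,
      ((Ael H : Module.End ℤ (BigPermModule ℤ G)))
        (((E1el (G := G) : Module.End ℤ (BigPermModule ℤ G)))
          (((Bel H : Module.End ℤ (BigPermModule ℤ G))) v))
        = (Pi.single H (((Nat.card G : ℕ) : ℤ) • (v H)) : BigPermModule ℤ G) := by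
    intro H
    have hB : ((Bel H : Module.End ℤ (BigPermModule ℤ G)) v)
        = (Pi.single ⊥ (alphaH H (v H)) : BigPermModule ℤ G) := rfl
    rw [hB]
    have hE : (E1el (G := G) : Module.End ℤ (BigPermModule ℤ G))
          (Pi.single ⊥ (alphaH H (v H)) : BigPermModule ℤ G)
        = (Pi.single ⊥ (alphaH H (v H)) : BigPermModule ℤ G) := by
      show (Pi.single ⊥ ((Pi.single ⊥ (alphaH H (v H)) : BigPermModule ℤ G) ⊥)
          : BigPermModule ℤ G) = _
      rw [Pi.single_eq_same]
    rw [hE]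
    show (Pi.single H ((H.index : ℤ) • betaH H
        ((Pi.single ⊥ (alphaH H (v H)) : BigPermModule ℤ G) ⊥)) : BigPermModule ℤ G) = _
    rw [Pi.single_eq_same, betaH_alphaH]
    rw [smul_smul, ← Nat.cast_mul, Subgroup.index_mul_card]
  simp only [Module.End.mul_apply]
  rw [Finset.sum_congr rfl (fun H _ => hterm H)]
  rw [Finset.univ_sum_single (fun H => ((Nat.card G : ℕ) : ℤ) • (v H))]
  funext K
  rw [Module.End.natCast_apply, Pi.smul_apply]
  exact (natCast_zsmul _ _).symm

end Aux3
/-- **The Tate–Yoshida algebra is a finite ring killed by `|G|`.**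
For a finite group `G` of order `n`, one has `n · 1 = 0` in `τ_ℤ(G)`, and
`τ_ℤ(G)` is a finite ring. -/
theorem tateYoshida_card_eq_zero_and_finite
    (G : Type) [Group G] [Finite G] :
    ((Nat.card G : ℕ) : TateYoshidaAlgebra ℤ G) = 0 ∧
      Finite (TateYoshidaAlgebra ℤ G) := by
  letI : DecidableEq (Subgroup G) := Classical.decEq _
  haveI : Fintype (Subgroup G) := Fintype.ofFinite _
  set rel := (fun a b : YoshidaAlgebra ℤ G => a = yoshidaE1 ℤ G ∧ b = 0) with hrel
  set π := RingQuot.mkRingHom rel with hπ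
  have he : π (yoshidaE1 ℤ G) = 0 := by
    have := RingQuot.mkRingHom_rel (r := rel) (x := yoshidaE1 ℤ G) (y := 0) ⟨rfl, rfl⟩
    rw [← hπ] at this
    rw [this, map_zero]
  -- the key identity in the Yoshida algebra
  have hid : ((Nat.card G : ℕ) : YoshidaAlgebra ℤ G)
      = ∑ H : Subgroup G,
          MulOpposite.op (Bel H) * yoshidaE1 ℤ G * MulOpposite.op (Ael H) := by
    have h1 : ((Nat.card G : ℕ) : YoshidaAlgebra ℤ G)
        = MulOpposite.op ((Nat.card G : ℕ) : permEnd ℤ G) := by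
      rw [MulOpposite.op_natCast]
    rw [h1, key_sum]
    have hops := map_sum (MulOpposite.opAddEquiv (α := ↥(permEnd ℤ G))).toAddMonoidHom
      (fun H : Subgroup G => Ael H * E1el * Bel H) Finset.univ
    rw [show (MulOpposite.opAddEquiv (α := ↥(permEnd ℤ G))).toAddMonoidHom
        (∑ H : Subgroup G, Ael H * E1el * Bel H)
      = MulOpposite.op (∑ H : Subgroup G, Ael H * E1el * Bel H) from rfl] at hops
    rw [hops]
    refine Finset.sum_congr rfl (fun H _ => ?_)
    show MulOpposite.op (Ael H * E1el * Bel H)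
      = MulOpposite.op (Bel H) * yoshidaE1 ℤ G * MulOpposite.op (Ael H)
    rw [MulOpposite.op_mul, MulOpposite.op_mul]
    rw [show yoshidaE1 ℤ G = MulOpposite.op (E1el (G := G)) from rfl]
    rw [mul_assoc]
  -- first part
  have hzero : ((Nat.card G : ℕ) : TateYoshidaAlgebra ℤ G) = 0 := by
    have : ((Nat.card G : ℕ) : TateYoshidaAlgebra ℤ G)
        = π ((Nat.card G : ℕ) : YoshidaAlgebra ℤ G) := (map_natCast π _).symm
    rw [this, hid, map_sum]
    refine Finset.sum_eq_zero (fun H _ => ?_)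
    rw [map_mul, map_mul, he, mul_zero, zero_mul]
  refine ⟨hzero, ?_⟩
  -- finiteness
  haveI : Module.Finite ℤ (BigPermModule ℤ G) := Module.Finite.pi
  haveI : Module.Free ℤ (BigPermModule ℤ G) := Module.Free.pi _ _
  haveI : IsNoetherian ℤ (Module.End ℤ (BigPermModule ℤ G)) :=
    isNoetherian_of_isNoetherianRing_of_finite ℤ _
  set S : Submodule ℤ (Module.End ℤ (BigPermModule ℤ G)) :=
    AddSubgroup.toIntSubmodule (permEnd ℤ G).toAddSubgroup with hS
  haveI : Module.Finite ℤ ↥S := Module.Finite.iff_fg.mpr (IsNoetherian.noetherian S)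
  have hfgS : AddGroup.FG ↥S := Module.Finite.iff_addGroup_fg.mp inferInstance
  -- surjection from S onto the Tate–Yoshida algebra
  let ψ : ↥S →+ TateYoshidaAlgebra ℤ G :=
    (π.toAddMonoidHom.comp (MulOpposite.opAddEquiv :
        permEnd ℤ G ≃+ (permEnd ℤ G)ᵐᵒᵖ).toAddMonoidHom).comp
      { toFun := fun x => (⟨x.1, x.2⟩ : permEnd ℤ G)
        map_zero' := rfl
        map_add' := fun _ _ => rfl }
  have hψ : Function.Surjective ψ := by
    intro x
    obtain ⟨y, rfl⟩ := RingQuot.mkRingHom_surjective rel x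
    exact ⟨⟨y.unop.1, y.unop.2⟩, rfl⟩
  haveI : AddGroup.FG (TateYoshidaAlgebra ℤ G) := AddGroup.fg_of_surjective (f := ψ) hψ
  have htor : AddMonoid.IsTorsion (TateYoshidaAlgebra ℤ G) := by
    intro x
    rw [isOfFinAddOrder_iff_nsmul_eq_zero]
    refine ⟨Nat.card G, Nat.card_pos, ?_⟩
    rw [nsmul_eq_mul, hzero, zero_mul]
  exact AddCommGroup.finite_of_fg_torsion _ htor
end
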